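/- Under the stated hypotheses, W + Σ_{t∈T} Σ_{n∈T, n≠t} γ_t·(ρ^num_{nt} − ρ^den_{nt}) ≥ Σ_{t∈T} γ_t > 0. That is, the denominator W_q + Σ_{t,n≠t} γ^diff_{qnt} appearing in the KDE-HMM bandwidth and weight update formulas is strictly positive, so the updated parameters are always well defined. -/

import Mathlib

/-- The function `G` from the reverse-Jensen bounds of Jebara (2001). -/
noncomputable def reverseJensenG (γ : ℝ) : ℝ :=
  if γ < 1 / 6 then
    ((γ - 1) / Real.log γ) ^ 2 - 1 / (4 * Real.log γ)
  else
    ((1 / 6 - 1) / Real.log (1 / 6)) ^ 2 - 1 / (4 * Real.log (1 / 6)) + γ - 1 / 6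


lemma G_nonneg (x : ℝ) (hx : 0 < x) : 0 ≤ reverseJensenG x := by
  unfold reverseJensenG
  split_ifs with h
  · have hlog : Real.log x < 0 := Real.log_neg hx (by linarith)
    have h4 : 1 / (4 * Real.log x) < 0 :=
      div_neg_of_pos_of_neg one_pos (by linarith)
    nlinarith [sq_nonneg ((x - 1) / Real.log x)]
  · have hlog : Real.log (1/6 : ℝ) < 0 := Real.log_neg (by norm_num) (by norm_num)
    have h4 : 1 / (4 * Real.log (1/6 : ℝ)) < 0 :=
      div_neg_of_pos_of_neg one_pos (by linarith)
    have hx6 : (1/6 : ℝ) ≤ x := le_of_not_gt h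
    nlinarith [sq_nonneg ((1/6 - 1 : ℝ) / Real.log (1/6))]

open Finset in
/-- The denominator `W_q + ∑_{t, n ≠ t} γ^diff_{qnt}` appearing in the KDE-HMM bandwidth
and weight update formulas is at least `∑ t, γ t > 0`, so the updated parameters are
always well defined. -/
theorem kdehmm_update_denominator_pos
    (T : Type*) [Fintype T] [DecidableEq T] (hT : 2 ≤ Fintype.card T)
    (p : ℕ) (hp : 1 ≤ p)
    (γ : T → ℝ) (hγ : ∀ t, 0 ≤ γ t) (hγsum : 0 < ∑ t, γ t)
    (ρnum ρden : T → T → ℝ)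
    (hρnum_nonneg : ∀ t n, n ≠ t → 0 ≤ ρnum n t)
    (hρnum_sum : ∀ t, ∑ n ∈ univ.erase t, ρnum n t = 1)
    (hρden_pos : ∀ t n, n ≠ t → 0 < ρden n t)
    (hρden_le_one : ∀ t n, n ≠ t → ρden n t ≤ 1)
    (hρden_sum : ∀ t, ∑ n ∈ univ.erase t, ρden n t = 1)
    (w : T → ℝ) (hw_pos : ∀ n, 0 < w n) (hw_le_one : ∀ n, w n ≤ 1)
    (ξh : Fin p → T → T → ℝ) :
    (let ξw : T → ℝ := fun n => 1 / w n - 1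
     let ωh : T → T → ℝ := fun n t =>
       2 * reverseJensenG (ρden n t / 2) * ∑ l : Fin p, (ξh l n t) ^ 2
     let ωw : T → T → ℝ := fun n t => 4 * reverseJensenG (ρden n t / 2) * ξw n
     let ω' : T → T → ℝ := fun n t =>
       ρden n t *
         max (Finset.univ.sup' ⟨⟨0, hp⟩, Finset.mem_univ _⟩ fun l : Fin p => ξh l n t)
           (ξw n)
     let W : ℝ :=
       ∑ t, ∑ n ∈ univ.erase t, γ t * (ρden n t + ωh n t + ωw n t + ω' n t)
     W + ∑ t, ∑ n ∈ univ.erase t, γ t * (ρnum n t - ρden n t) ≥ ∑ t, γ t) ∧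
      0 < ∑ t, γ t := by
  refine ⟨?_, hγsum⟩
  intro ξw ωh ωw ω' W
  have hξw : ∀ n, 0 ≤ ξw n := by
    intro n
    have h1 : 1 ≤ 1 / w n := by
      rw [le_div_iff₀ (hw_pos n)]; linarith [hw_le_one n]
    simp only [ξw]; linarith
  have hG : ∀ t n, n ≠ t → 0 ≤ reverseJensenG (ρden n t / 2) := by
    intro t n hnt
    have hx : 0 < ρden n t / 2 := by linarith [hρden_pos t n hnt]
    exact G_nonneg _ hx
  have hωh : ∀ t n, n ≠ t → 0 ≤ ωh n t := by
    intro t n hnt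
    have hs : 0 ≤ ∑ l : Fin p, (ξh l n t) ^ 2 :=
      Finset.sum_nonneg fun l _ => sq_nonneg _
    have := hG t n hnt
    simp only [ωh]; positivity
  have hωw : ∀ t n, n ≠ t → 0 ≤ ωw n t := by
    intro t n hnt
    have := hG t n hnt
    have := hξw n
    simp only [ωw]; positivity
  have hω' : ∀ t n, n ≠ t → 0 ≤ ω' n t := by
    intro t n hnt
    have h1 : (0:ℝ) ≤ max (Finset.univ.sup' ⟨⟨0, hp⟩, Finset.mem_univ _⟩ fun l : Fin p => ξh l n t) (ξw n) :=
      le_trans (hξw n) (le_max_right _ _)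
    exact mul_nonneg (le_of_lt (hρden_pos t n hnt)) h1
  have hEq : W + ∑ t, ∑ n ∈ univ.erase t, γ t * (ρnum n t - ρden n t)
      = ∑ t, ∑ n ∈ univ.erase t, γ t * (ρnum n t + ωh n t + ωw n t + ω' n t) := by
    simp only [W, ← Finset.sum_add_distrib]
    refine Finset.sum_congr rfl fun t _ => Finset.sum_congr rfl fun n _ => by ring
  rw [ge_iff_le, hEq]
  have hRHS : ∑ t, γ t = ∑ t, ∑ n ∈ univ.erase t, γ t * ρnum n t := by
    refine Finset.sum_congr rfl fun t _ => ?_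
    rw [← Finset.mul_sum, hρnum_sum t, mul_one]
  rw [hRHS]
  refine Finset.sum_le_sum fun t _ => Finset.sum_le_sum fun n hn => ?_
  have hnt : n ≠ t := (Finset.mem_erase.1 hn).1
  have h1 := hωh t n hnt
  have h2 := hωw t n hnt
  have h3 := hω' t n hnt
  have := hγ t
  nlinarith [hρnum_nonneg t n hnt]
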